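/- Let $\mathcal{F}_-$ be an almost disjoint family such that for every convex null matrix $(\lambda_{i,j})$ there exists $N\in\mathcal{F}_-$ with $\limsup_{i\to\infty}\sum_{j\in N}\lambda_{i,j}>0$. Then no sequence in $C:=\mathrm{co}(\{e_n^* : n\in\mathbb{N}\})\subseteq JL_2(\mathcal{F}_-)^*$ is weak*-null; since $0\in\overline{C}^{w^*}$, the space $JL_2(\mathcal{F}_-)$ fails property $(\mathcal{E})$. -/

import Mathlib

open Filter Topology
open scoped Classical

/-- Theorem 4.5, with the structure of `JL₂(F₋)` axiomatized as in the preliminaries: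
`F₋` is an infinite almost disjoint family such that every convex null matrix
`(λ_{i,j})` admits `N ∈ F₋` with `limsup_i ∑_{j ∈ N} λ_{i,j} > 0`. Then no sequence
in `C = co({estar n : n ∈ ℕ})` is weak*-null and, since `0` belongs to the
weak*-closure of `C`, the space fails property (E). -/
theorem stmt17 {X : Type*} [NormedAddCommGroup X] [NormedSpace ℝ X] [CompleteSpace X]
    (F : Set (Set ℕ)) (hFinf : F.Infinite)
    (hmem : ∀ N ∈ F, N.Infinite)
    (hAD : ∀ N ∈ F, ∀ N' ∈ F, N ≠ N' → (N ∩ N').Finite)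
    (hmat : ∀ l : ℕ → ℕ → ℝ, (∀ i j, 0 ≤ l i j) → (∀ i, HasSum (l i) 1) →
      (∀ j, Tendsto (fun i => l i j) atTop (𝓝 0)) →
      ∃ N ∈ F, 0 < Filter.limsup (fun i => ∑' j, Set.indicator N (l i) j) atTop)
    (e : ℕ → X) (chi : Set ℕ → X)
    (estar : ℕ → X →L[ℝ] ℝ) (Nstar : Set ℕ → X →L[ℝ] ℝ)
    (hnorm1 : ∀ n, ‖estar n‖ ≤ 1) (hnorm2 : ∀ N ∈ F, ‖Nstar N‖ ≤ 1)
    (h1 : ∀ n j, estar n (e j) = if n = j then 1 else 0)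
    (h2 : ∀ n, ∀ N ∈ F, estar n (chi N) = if n ∈ N then 1 else 0)
    (h3 : ∀ N ∈ F, ∀ j, Nstar N (e j) = 0)
    (h4 : ∀ N ∈ F, ∀ N' ∈ F, Nstar N (chi N') = if N = N' then 1 else 0)
    (hdense : Dense (Submodule.span ℝ (Set.range e ∪ chi '' F) : Set X)) :
    (∀ y : ℕ → X →L[ℝ] ℝ, (∀ i, y i ∈ convexHull ℝ (Set.range estar)) →
      ¬ ∀ x : X, Tendsto (fun i => y i x) atTop (𝓝 0)) ∧
    ¬ (∀ C : Set (X →L[ℝ] ℝ), Convex ℝ C → Bornology.IsBounded C →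
        ∀ φ : X →L[ℝ] ℝ,
          StrongDual.toWeakDual φ ∈
            closure ((fun ψ : X →L[ℝ] ℝ => StrongDual.toWeakDual ψ) '' C) →
          ∃ u : ℕ → X →L[ℝ] ℝ, (∀ n, u n ∈ C) ∧
            ∀ x : X, Tendsto (fun n => u n x) atTop (𝓝 (φ x))) := by
  classical
  -- Every element of the convex hull is nonnegative on the `e j`.
  have hposset : ∀ φ ∈ convexHull ℝ (Set.range estar), ∀ j, (0:ℝ) ≤ φ (e j) := by
    have : convexHull ℝ (Set.range estar) ⊆ {φ : X →L[ℝ] ℝ | ∀ j, (0:ℝ) ≤ φ (e j)} := by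
      refine convexHull_min ?_ ?_
      · rintro ψ ⟨n, rfl⟩ j
        rw [h1]; split <;> norm_num
      · intro ψ₁ hψ₁ ψ₂ hψ₂ a b ha hb hab j
        have := hψ₁ j; have := hψ₂ j
        simp only [ContinuousLinearMap.add_apply, ContinuousLinearMap.coe_smul',
          Pi.smul_apply, smul_eq_mul]
        positivity
    exact fun φ hφ => this hφ
  -- Every element of the convex hull has coordinates summing to one, and its
  -- value at `chi N` is the sum of the coordinates over `N`.
  have hkey : ∀ N ∈ F, ∀ φ ∈ convexHull ℝ (Set.range estar),
      HasSum (fun j => φ (e j)) 1 ∧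
      HasSum (fun j => Set.indicator N (fun j => φ (e j)) j) (φ (chi N)) := by
    intro N hN
    have : convexHull ℝ (Set.range estar) ⊆ {φ : X →L[ℝ] ℝ | HasSum (fun j => φ (e j)) 1 ∧
        HasSum (fun j => Set.indicator N (fun j => φ (e j)) j) (φ (chi N))} := by
      refine convexHull_min ?_ ?_
      · rintro ψ ⟨n, rfl⟩
        constructor
        · have hf : (fun j => estar n (e j)) = fun j => if j = n then (1:ℝ) else 0 := by
            funext j; rw [h1]; exact if_congr eq_comm rfl rfl
          rw [hf]; exact hasSum_ite_eq n 1
        · have hf : (fun j => Set.indicator N (fun j => estar n (e j)) j)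
              = fun j => if j = n then (if n ∈ N then (1:ℝ) else 0) else 0 := by
            funext j
            by_cases hj : j = n
            · subst hj; simp [Set.indicator_apply, h1]
            · have : n ≠ j := fun h => hj h.symm
              simp [Set.indicator_apply, h1, hj, this]
          rw [hf, h2 n N hN]; exact hasSum_ite_eq n _
      · intro ψ₁ hψ₁ ψ₂ hψ₂ a b ha hb hab
        simp only [Set.mem_setOf_eq] at hψ₁ hψ₂ ⊢
        constructor
        · have := (hψ₁.1.mul_left a).add (hψ₂.1.mul_left b)
          simp only [mul_one] at this
          rw [hab] at this
          convert this using 1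
          · rfl
          funext j; simp
        · have := (hψ₁.2.mul_left a).add (hψ₂.2.mul_left b)
          convert this using 1
          · rfl
          funext j
          by_cases hj : j ∈ N <;>
            simp [Set.indicator_apply, hj, ContinuousLinearMap.add_apply]
          simp
    exact fun φ hφ => this hφ
  -- Part 1: no sequence in the convex hull is weak*-null.
  have part1 : ∀ y : ℕ → X →L[ℝ] ℝ, (∀ i, y i ∈ convexHull ℝ (Set.range estar)) →
      ¬ ∀ x : X, Tendsto (fun i => y i x) atTop (𝓝 0) := by
    intro y hy h0
    obtain ⟨N0, hN0F⟩ := hFinf.nonempty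
    obtain ⟨N, hN, hlim⟩ := hmat (fun i j => y i (e j))
      (fun i j => hposset _ (hy i) j)
      (fun i => (hkey N0 hN0F _ (hy i)).1)
      (fun j => h0 (e j))
    have heq : (fun i => ∑' j, Set.indicator N (fun j => y i (e j)) j)
        = fun i => y i (chi N) :=
      funext fun i => ((hkey N hN _ (hy i)).2).tsum_eq
    rw [heq, (h0 (chi N)).limsup_eq] at hlim
    exact lt_irrefl 0 hlim
  -- Vanishing on the span of the generators off a finite "bad" set.
  have hvan : ∀ s ∈ Submodule.span ℝ (Set.range e ∪ chi '' F),
      ∃ (J : Finset ℕ) (G : Finset (Set ℕ)), ↑G ⊆ F ∧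
        ∀ n, n ∉ J → (∀ N ∈ G, n ∉ N) → estar n s = 0 := by
    intro s hs
    induction hs using Submodule.span_induction with
    | mem x hx =>
        rcases hx with ⟨j, rfl⟩ | ⟨N, hNF, rfl⟩
        · refine ⟨{j}, ∅, by simp, fun n hn _ => ?_⟩
          rw [h1]
          simp only [Finset.mem_singleton] at hn
          simp [hn]
        · refine ⟨∅, {N}, by simpa using hNF, fun n _ hn => ?_⟩
          rw [h2 n N hNF]
          simp [hn N (Finset.mem_singleton_self N)]
    | zero => exact ⟨∅, ∅, by simp, fun n _ _ => map_zero _⟩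
    | add x y hx hy ihx ihy =>
        obtain ⟨J1, G1, hG1, hz1⟩ := ihx
        obtain ⟨J2, G2, hG2, hz2⟩ := ihy
        refine ⟨J1 ∪ J2, G1 ∪ G2, ?_, fun n hn hG => ?_⟩
        · intro N hNg
          simp only [Finset.coe_union, Set.mem_union] at hNg
          rcases hNg with h | h
          · exact hG1 h
          · exact hG2 h
        · rw [map_add, hz1 n (fun h => hn (Finset.mem_union_left _ h))
            (fun N hN => hG N (Finset.mem_union_left _ hN)),
            hz2 n (fun h => hn (Finset.mem_union_right _ h))
            (fun N hN => hG N (Finset.mem_union_right _ hN)), add_zero]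
    | smul a x hx ih =>
        obtain ⟨J, G, hG, hz⟩ := ih
        exact ⟨J, G, hG, fun n hn hN => by rw [map_smul, hz n hn hN, smul_zero]⟩
  -- For any finite set of vectors and ε > 0 there is n with |estar n x| < ε on it.
  have hsmall : ∀ (I : Finset X) (ε : ℝ), 0 < ε → ∃ n, ∀ x ∈ I, |estar n x| < ε := by
    intro I ε hε
    have hdx : ∀ x : X, ∃ s, s ∈ (Submodule.span ℝ (Set.range e ∪ chi '' F) : Set X) ∧
        dist x s < ε/2 := by
      intro x
      have hx := hdense x
      rw [Metric.mem_closure_iff] at hx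
      exact hx (ε/2) (by linarith)
    choose sf hsf1 hsf2 using hdx
    have hvx : ∀ x : X, ∃ (J : Finset ℕ) (G : Finset (Set ℕ)), ↑G ⊆ F ∧
        ∀ n, n ∉ J → (∀ N ∈ G, n ∉ N) → estar n (sf x) = 0 := fun x => hvan _ (hsf1 x)
    choose Jf Gf hGf hzf using hvx
    obtain ⟨N'', hN''F, hN''G⟩ := hFinf.exists_notMem_finset (I.biUnion Gf)
    set bad : Set ℕ := ↑(I.biUnion Jf) ∪ ⋃ N ∈ (I.biUnion Gf : Finset (Set ℕ)), N with hbad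
    have hfin : (N'' ∩ bad).Finite := by
      rw [hbad, Set.inter_union_distrib_left]
      refine Set.Finite.union ((I.biUnion Jf).finite_toSet.inter_of_right _) ?_
      rw [Set.inter_iUnion₂]
      refine Set.Finite.biUnion (Finset.finite_toSet _) (fun N hN => ?_)
      refine hAD N'' hN''F N ?_ ?_
      · obtain ⟨x, hxI, hNx⟩ := Finset.mem_biUnion.mp hN
        exact hGf x hNx
      · intro h
        exact hN''G (h ▸ hN)
    have hinf : (N'' \ bad).Infinite := by
      have := (hmem N'' hN''F).diff hfin
      have heq : N'' \ (N'' ∩ bad) = N'' \ bad := by ext m; simp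
      rwa [heq] at this
    obtain ⟨n, hnN'', hnbad⟩ := hinf.nonempty
    refine ⟨n, fun x hxI => ?_⟩
    have hzero : estar n (sf x) = 0 := by
      refine hzf x n (fun h => ?_) (fun N hN hnN => ?_)
      · exact hnbad (Or.inl (Finset.mem_coe.mpr (Finset.mem_biUnion.mpr ⟨x, hxI, h⟩)))
      · exact hnbad (Or.inr (Set.mem_biUnion (Finset.mem_biUnion.mpr ⟨x, hxI, hN⟩) hnN))
    have hx1 : estar n x = estar n (x - sf x) := by rw [map_sub, hzero, sub_zero]
    have hx2 : |estar n (x - sf x)| ≤ ‖x - sf x‖ := by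
      calc |estar n (x - sf x)| = ‖estar n (x - sf x)‖ := (Real.norm_eq_abs _).symm
      _ ≤ ‖estar n‖ * ‖x - sf x‖ := (estar n).le_opNorm _
      _ ≤ 1 * ‖x - sf x‖ := mul_le_mul_of_nonneg_right (hnorm1 n) (norm_nonneg _)
      _ = ‖x - sf x‖ := one_mul _
    have hx3 : ‖x - sf x‖ < ε/2 := by rw [← dist_eq_norm]; exact hsf2 x
    rw [hx1]
    linarith [hx2, hx3]
  -- 0 is in the weak* closure of the convex hull.
  have hzero_mem : StrongDual.toWeakDual (0 : X →L[ℝ] ℝ) ∈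
      closure ((fun ψ : X →L[ℝ] ℝ => StrongDual.toWeakDual ψ) ''
        (convexHull ℝ (Set.range estar))) := by
    rw [mem_closure_iff]
    intro o ho h0o
    obtain ⟨V, hV, hVo⟩ := isOpen_induced_iff.mp ho
    have h0V : (fun x => (topDualPairing ℝ X)
        (StrongDual.toWeakDual (0 : X →L[ℝ] ℝ)) x) ∈ V := by
      rw [← hVo] at h0o
      exact h0o
    obtain ⟨I, u, hIu, hsub⟩ := isOpen_pi_iff.mp hV _ h0V
    have h0u : ∀ a ∈ I, (0:ℝ) ∈ u a := by
      intro a ha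
      have := (hIu a ha).2
      exact this
    have hball : ∃ ε > 0, ∀ a ∈ I, Metric.ball (0:ℝ) ε ⊆ u a := by
      choose! εf hεf hb using fun a (ha : a ∈ I) =>
        Metric.isOpen_iff.mp (hIu a ha).1 0 (h0u a ha)
      rcases I.eq_empty_or_nonempty with rfl | hne
      · exact ⟨1, one_pos, by simp⟩
      · refine ⟨I.inf' hne εf, ?_, fun a ha => ?_⟩
        · show (0:ℝ) < I.inf' hne εf
          rw [Finset.lt_inf'_iff]
          exact fun a ha => hεf a ha
        · exact (Metric.ball_subset_ball (Finset.inf'_le εf ha)).trans (hb a ha)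
    obtain ⟨ε, hε, hbd⟩ := hball
    obtain ⟨n, hn⟩ := hsmall I ε hε
    refine ⟨StrongDual.toWeakDual (estar n), ?_, ⟨estar n,
      subset_convexHull ℝ _ (Set.mem_range_self n), rfl⟩⟩
    rw [← hVo]
    refine hsub ?_
    intro a ha
    refine hbd a ha ?_
    rw [Metric.mem_ball, Real.dist_0_eq_abs]
    exact hn a ha
  refine ⟨part1, ?_⟩
  intro hE
  have hbdd : Bornology.IsBounded (convexHull ℝ (Set.range estar)) := by
    have hsub : convexHull ℝ (Set.range estar) ⊆ Metric.closedBall 0 1 :=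
      convexHull_min (by rintro ψ ⟨n, rfl⟩; simpa [mem_closedBall_zero_iff] using hnorm1 n)
        (convex_closedBall 0 1)
    exact Metric.isBounded_closedBall.subset hsub
  obtain ⟨u, huC, hconv⟩ := hE (convexHull ℝ (Set.range estar))
    (convex_convexHull ℝ _) hbdd 0 hzero_mem
  exact part1 u huC (fun x => by simpa using hconv x)
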